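/- The function f(x,y) = 2·artanh(tanh(x/2)·tanh(y/2)) satisfies sign(f(x,y)) = sign(x)·sign(y) and |f(x,y)| ≤ min(|x|, |y|) for all real x, y. -/
import Mathlib


/-- The inverse hyperbolic tangent on `(-1, 1)`. -/
noncomputable def artanh (x : ℝ) : ℝ := (1 / 2) * Real.log ((1 + x) / (1 - x))

/-- The check-node function `f(x,y) = 2·artanh(tanh(x/2)·tanh(y/2))`. -/
noncomputable def checkF (x y : ℝ) : ℝ := 2 * artanh (Real.tanh (x / 2) * Real.tanh (y / 2))

private lemma tanh_lt_one' (u : ℝ) : Real.tanh u < 1 := by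
  rw [Real.tanh_eq_sinh_div_cosh, div_lt_one (Real.cosh_pos u)]
  have := Real.exp_pos (-u)
  rw [Real.sinh_eq, Real.cosh_eq]; linarith

private lemma neg_one_lt_tanh' (u : ℝ) : -1 < Real.tanh u := by
  have := tanh_lt_one' (-u)
  rw [Real.tanh_neg] at this; linarith

private lemma abs_tanh_lt_one (u : ℝ) : |Real.tanh u| < 1 :=
  abs_lt.2 ⟨neg_one_lt_tanh' u, tanh_lt_one' u⟩

private lemma tanh_pos' {u : ℝ} (h : 0 < u) : 0 < Real.tanh u := by
  rw [Real.tanh_eq_sinh_div_cosh]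
  exact div_pos (by rwa [Real.sinh_pos_iff]) (Real.cosh_pos u)

private lemma tanh_neg' {u : ℝ} (h : u < 0) : Real.tanh u < 0 := by
  have := tanh_pos' (u := -u) (by linarith)
  rw [Real.tanh_neg] at this; linarith

private lemma artanh_zero : artanh 0 = 0 := by simp [artanh]

private lemma artanh_odd (t : ℝ) (h : |t| < 1) : artanh (-t) = -artanh t := by
  rw [abs_lt] at h
  have h1 : (0:ℝ) < 1 + t := by linarith
  have h2 : (0:ℝ) < 1 - t := by linarith
  unfold artanh
  rw [show (1 + -t) / (1 - -t) = ((1 + t) / (1 - t))⁻¹ by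
    rw [inv_div]; ring_nf]
  rw [Real.log_inv]; ring

private lemma artanh_pos {t : ℝ} (h0 : 0 < t) (h1 : t < 1) : 0 < artanh t := by
  unfold artanh
  have : (1:ℝ) < (1 + t) / (1 - t) := by
    rw [lt_div_iff₀ (by linarith)]; linarith
  have := Real.log_pos this
  linarith

private lemma artanh_mono {a b : ℝ} (ha : 0 ≤ a) (hab : a ≤ b) (hb : b < 1) :
    artanh a ≤ artanh b := by
  unfold artanh
  have h1 : (0:ℝ) < 1 - b := by linarith
  have h2 : (0:ℝ) < 1 - a := by linarith
  have hpos : (0:ℝ) < (1 + a) / (1 - a) := by positivity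
  have hle : (1 + a) / (1 - a) ≤ (1 + b) / (1 - b) := by
    rw [div_le_div_iff₀ h2 h1]; nlinarith
  have := Real.log_le_log hpos hle
  linarith

private lemma artanh_tanh (u : ℝ) : artanh (Real.tanh u) = u := by
  unfold artanh
  have key : (1 + Real.tanh u) / (1 - Real.tanh u) = Real.exp (2 * u) := by
    rw [Real.tanh_eq_sinh_div_cosh, Real.sinh_eq, Real.cosh_eq]
    have he : Real.exp u * Real.exp (-u) = 1 := by
      rw [← Real.exp_add]; simp
    have h1 : (0:ℝ) < Real.exp u := Real.exp_pos u
    have h2 : (0:ℝ) < Real.exp (-u) := Real.exp_pos (-u)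
    rw [show Real.exp (2*u) = Real.exp u * Real.exp u by
      rw [← Real.exp_add]; ring_nf]
    field_simp
    nlinarith
  rw [key, Real.log_exp]; ring

private lemma abs_artanh (t : ℝ) (h : |t| < 1) : |artanh t| = artanh |t| := by
  rcases le_or_gt 0 t with ht | ht
  · rw [abs_of_nonneg ht, abs_of_nonneg]
    rcases eq_or_lt_of_le ht with rfl | ht'
    · simp [artanh_zero]
    · exact le_of_lt (artanh_pos ht' (by rwa [abs_of_nonneg ht] at h))
  · have h2 := artanh_pos (t := -t) (by linarith) (by rwa [abs_of_neg ht] at h)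
    rw [artanh_odd t h] at h2
    rw [abs_of_neg ht, artanh_odd t h, abs_of_neg (by linarith : artanh t < 0)]

private lemma checkF_abs_le_left (x y : ℝ) : |checkF x y| ≤ |x| := by
  set a := Real.tanh (x / 2) with ha
  set b := Real.tanh (y / 2) with hb
  have hab : |a * b| < 1 := by
    rw [abs_mul]
    calc |a| * |b| ≤ |a| * 1 :=
          mul_le_mul_of_nonneg_left (le_of_lt (abs_tanh_lt_one _)) (abs_nonneg _)
      _ = |a| := mul_one _
      _ < 1 := abs_tanh_lt_one _
  have habs_a : |a| = Real.tanh (|x| / 2) := by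
    rcases le_or_gt 0 x with hx | hx
    · rw [abs_of_nonneg hx, abs_of_nonneg]
      rcases eq_or_lt_of_le hx with rfl | hx'
      · simp [ha, Real.tanh_zero]
      · exact le_of_lt (tanh_pos' (by linarith))
    · rw [abs_of_neg hx, ha, show -x / 2 = -(x/2) by ring, Real.tanh_neg, abs_of_neg]
      exact tanh_neg' (by linarith)
  have hle : |a * b| ≤ Real.tanh (|x| / 2) := by
    rw [abs_mul, ← habs_a]
    calc |a| * |b| ≤ |a| * 1 :=
          mul_le_mul_of_nonneg_left (le_of_lt (abs_tanh_lt_one _)) (abs_nonneg _)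
      _ = |a| := mul_one _
  have hm := artanh_mono (abs_nonneg (a*b)) hle (tanh_lt_one' _)
  rw [artanh_tanh] at hm
  have habsF : |checkF x y| = 2 * artanh |a * b| := by
    unfold checkF
    rw [abs_mul, abs_of_nonneg (by norm_num : (0:ℝ) ≤ 2), abs_artanh _ hab]
  rw [habsF]; linarith

private lemma checkF_comm (x y : ℝ) : checkF x y = checkF y x := by
  unfold checkF; rw [mul_comm (Real.tanh (x / 2))]

/-- `sign(f(x,y)) = sign(x)·sign(y)` and `|f(x,y)| ≤ min(|x|,|y|)` for all real `x, y`,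
justifying the min-sum approximation of the check-node operation. -/
theorem checkF_sign_and_min_bound (x y : ℝ) :
    Real.sign (checkF x y) = Real.sign x * Real.sign y ∧
    |checkF x y| ≤ min |x| |y| := by
  constructor
  · have hab : ∀ u v : ℝ, |Real.tanh (u/2) * Real.tanh (v/2)| < 1 := by
      intro u v
      rw [abs_mul]
      calc |Real.tanh (u/2)| * |Real.tanh (v/2)| ≤ |Real.tanh (u/2)| * 1 :=
            mul_le_mul_of_nonneg_left (le_of_lt (abs_tanh_lt_one _)) (abs_nonneg _)
        _ = |Real.tanh (u/2)| := mul_one _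
        _ < 1 := abs_tanh_lt_one _
    rcases lt_trichotomy x 0 with hx | hx | hx <;>
      rcases lt_trichotomy y 0 with hy | hy | hy
    · have h1 := tanh_neg' (u := x/2) (by linarith)
      have h2 := tanh_neg' (u := y/2) (by linarith)
      have hp : 0 < Real.tanh (x/2) * Real.tanh (y/2) := mul_pos_of_neg_of_neg h1 h2
      have hlt : Real.tanh (x/2) * Real.tanh (y/2) < 1 := by
        have := hab x y; rw [abs_lt] at this; exact this.2
      have := artanh_pos hp hlt
      rw [show checkF x y = 2 * artanh (Real.tanh (x/2) * Real.tanh (y/2)) from rfl,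
        Real.sign_of_pos (by linarith), Real.sign_of_neg hx, Real.sign_of_neg hy]
      norm_num
    · subst hy; simp [checkF, Real.tanh_zero, artanh_zero, Real.sign_zero]
    · have h1 := tanh_neg' (u := x/2) (by linarith)
      have h2 := tanh_pos' (u := y/2) (by linarith)
      have hp : Real.tanh (x/2) * Real.tanh (y/2) < 0 := mul_neg_of_neg_of_pos h1 h2
      have h' := hab x y
      have := artanh_pos (t := -(Real.tanh (x/2) * Real.tanh (y/2))) (by linarith)
        (by rw [abs_lt] at h'; linarith)
      rw [artanh_odd _ h'] at this
      rw [show checkF x y = 2 * artanh (Real.tanh (x/2) * Real.tanh (y/2)) from rfl,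
        Real.sign_of_neg (by linarith), Real.sign_of_neg hx, Real.sign_of_pos hy]
      norm_num
    · subst hx; simp [checkF, Real.tanh_zero, artanh_zero, Real.sign_zero]
    · subst hx; simp [checkF, Real.tanh_zero, artanh_zero, Real.sign_zero]
    · subst hx; simp [checkF, Real.tanh_zero, artanh_zero, Real.sign_zero]
    · have h1 := tanh_pos' (u := x/2) (by linarith)
      have h2 := tanh_neg' (u := y/2) (by linarith)
      have hp : Real.tanh (x/2) * Real.tanh (y/2) < 0 := mul_neg_of_pos_of_neg h1 h2
      have h' := hab x y
      have := artanh_pos (t := -(Real.tanh (x/2) * Real.tanh (y/2))) (by linarith)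
        (by rw [abs_lt] at h'; linarith)
      rw [artanh_odd _ h'] at this
      rw [show checkF x y = 2 * artanh (Real.tanh (x/2) * Real.tanh (y/2)) from rfl,
        Real.sign_of_neg (by linarith), Real.sign_of_pos hx, Real.sign_of_neg hy]
      norm_num
    · subst hy; simp [checkF, Real.tanh_zero, artanh_zero, Real.sign_zero]
    · have h1 := tanh_pos' (u := x/2) (by linarith)
      have h2 := tanh_pos' (u := y/2) (by linarith)
      have hp : 0 < Real.tanh (x/2) * Real.tanh (y/2) := mul_pos h1 h2
      have hlt : Real.tanh (x/2) * Real.tanh (y/2) < 1 := by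
        have := hab x y; rw [abs_lt] at this; exact this.2
      have := artanh_pos hp hlt
      rw [show checkF x y = 2 * artanh (Real.tanh (x/2) * Real.tanh (y/2)) from rfl,
        Real.sign_of_pos (by linarith), Real.sign_of_pos hx, Real.sign_of_pos hy]
      norm_num
  · exact le_min (checkF_abs_le_left x y) (by rw [checkF_comm]; exact checkF_abs_le_left y x)
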